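/- Let 2 ≤ s ≤ t be integers and let X ⊆ [t]^k be a finite set of strings of length k over the alphabet {1,...,t} such that for any two distinct strings x, x' ∈ X and any s-element subset S ⊆ {1,...,t}, there exists a position i with x(i) ≠ x'(i) and x(i), x'(i) ∈ S. Then |X| ≤ s^(s·k/t), i.e. |X|^t ≤ s^(s·k). -/

import Mathlib

open Finset

lemma nat_amgm {β : Type*} (A : Finset β) (b : β → ℕ) :
    A.card ^ A.card * ∏ x ∈ A, b x ≤ (∑ x ∈ A, b x) ^ A.card := by
  rcases A.eq_empty_or_nonempty with rfl | hA
  · simp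
  have hn : 0 < A.card := Finset.card_pos.mpr hA
  have hnR : (0:ℝ) < (A.card : ℝ) := by exact_mod_cast hn
  have key : ∏ x ∈ A, ((b x : ℝ)) ^ ((A.card : ℝ)⁻¹) ≤ (∑ x ∈ A, (b x : ℝ)) / A.card := by
    have := Real.geom_mean_le_arith_mean_weighted A (fun _ => (A.card : ℝ)⁻¹)
      (fun x => (b x : ℝ)) (fun i _ => by positivity)
      (by simp [Finset.sum_const]; field_simp)
      (fun i _ => by positivity)
    simpa [← Finset.mul_sum, div_eq_inv_mul] using this
  have h2 : (∏ x ∈ A, (b x : ℝ)) ≤ ((∑ x ∈ A, (b x : ℝ)) / A.card) ^ A.card := by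
    calc (∏ x ∈ A, (b x:ℝ))
        = (∏ x ∈ A, ((b x : ℝ)) ^ ((A.card:ℝ)⁻¹)) ^ (A.card : ℕ) := by
          rw [← Finset.prod_pow]
          refine Finset.prod_congr rfl fun x _ => ?_
          rw [← Real.rpow_natCast ((b x:ℝ) ^ ((A.card:ℝ)⁻¹)) A.card,
            ← Real.rpow_mul (by positivity)]
          rw [inv_mul_cancel₀ hnR.ne', Real.rpow_one]
      _ ≤ _ := pow_le_pow_left₀ (Finset.prod_nonneg fun x _ => by positivity) key _
  rw [div_pow, le_div_iff₀ (by positivity)] at h2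
  have : ((A.card : ℝ)) ^ A.card * ∏ x ∈ A, (b x:ℝ) ≤ (∑ x ∈ A, (b x:ℝ)) ^ A.card := by
    linarith [h2]
  exact_mod_cast this

theorem stmt_0 (s t k : ℕ) (hs : 2 ≤ s) (hst : s ≤ t)
    (X : Finset (Fin k → Fin t))
    (hX : ∀ x ∈ X, ∀ x' ∈ X, x ≠ x' →
      ∀ S : Finset (Fin t), S.card = s →
        ∃ i : Fin k, x i ≠ x' i ∧ x i ∈ S ∧ x' i ∈ S) :
    X.card ^ t ≤ s ^ (s * k) := by
  classical
  obtain ⟨T, rfl⟩ : ∃ T, t = T + 1 := ⟨t - 1, by omega⟩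
  set n := X.card with hn
  rcases Nat.lt_or_ge n 2 with h2 | h2
  · -- n = 0 or 1
    interval_cases n
    · simp
    · simpa using Nat.one_le_pow (s*k) s (by omega)
  -- windows
  set P : Fin (T+1) → Fin (T+1) → Prop := fun j a => ((a - j : Fin (T+1)) : ℕ) < s with hP
  set W : Fin (T+1) → Finset (Fin (T+1)) := fun j => Finset.univ.filter (P j) with hWdef
  have hbase : (Finset.univ.filter fun b : Fin (T+1) => (b:ℕ) < s).card = s := by
    have he : (Finset.univ.filter fun b : Fin (T+1) => (b:ℕ) < s)
        = Finset.map (Fin.castLEEmb hst) Finset.univ := by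
      ext b
      simp only [Finset.mem_filter, Finset.mem_map, Finset.mem_univ, true_and,
        Fin.castLEEmb, Function.Embedding.coeFn_mk]
      constructor
      · intro hb
        exact ⟨⟨(b:ℕ), hb⟩, by ext; simp⟩
      · rintro ⟨v, rfl⟩
        simpa using v.2
    rw [he, Finset.card_map, Finset.card_univ, Fintype.card_fin]
  have hW : ∀ j, (W j).card = s := by
    intro j
    rw [← hbase, hWdef]
    apply Finset.card_bij' (fun a _ => a - j) (fun b _ => b + j)
    · intro a ha
      simp only [Finset.mem_filter, Finset.mem_univ, true_and]
      exact (Finset.mem_filter.mp ha).2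
    · intro b hb
      simp only [Finset.mem_filter, Finset.mem_univ, true_and, hP]
      simpa [add_sub_cancel_right] using (Finset.mem_filter.mp hb).2
    · intro a ha
      exact sub_add_cancel a j
    · intro b hb
      exact add_sub_cancel_right b j
  have hRow : ∀ a : Fin (T+1), (Finset.univ.filter fun j => P j a).card = s := by
    intro a
    refine Eq.trans ?_ hbase
    apply Finset.card_bij' (fun j _ => a - j) (fun b _ => a - b)
    · intro j hj
      simp only [Finset.mem_filter, Finset.mem_univ, true_and]
      exact (Finset.mem_filter.mp hj).2
    · intro b hb
      simp only [Finset.mem_filter, Finset.mem_univ, true_and, hP]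
      simpa [sub_sub_cancel] using (Finset.mem_filter.mp hb).2
    · intro j hj
      exact sub_sub_cancel a j
    · intro b hb
      exact sub_sub_cancel a b
  set d : Fin (T+1) → (Fin k → Fin (T+1)) → ℕ :=
    fun j x => (Finset.univ.filter fun i => P j (x i)).card with hd
  have hd_le : ∀ j x, d j x ≤ k := by
    intro j x
    simpa using Finset.card_filter_le Finset.univ (fun i => P j (x i))
  have hdsum : ∀ x, ∑ j : Fin (T+1), d j x = s * k := by
    intro x
    calc ∑ j : Fin (T+1), d j x
        = ∑ j : Fin (T+1), ∑ i : Fin k, if P j (x i) then 1 else 0 :=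
          Finset.sum_congr rfl fun j _ => Finset.card_filter _ _
      _ = ∑ i : Fin k, ∑ j : Fin (T+1), if P j (x i) then 1 else 0 := Finset.sum_comm
      _ = ∑ i : Fin k, s := by
          refine Finset.sum_congr rfl fun i _ => ?_
          rw [← Finset.card_filter]
          exact hRow (x i)
      _ = s * k := by simp [mul_comm]
  -- survivor sets
  set F : Fin (T+1) → (Fin k → Fin (T+1)) → Finset (Fin k → Fin s) :=
    fun j x => Fintype.piFinset (fun i =>
      if h : P j (x i) then {(⟨((x i - j) : Fin (T+1)).val, h⟩ : Fin s)} else Finset.univ) with hF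
  have cardF : ∀ j x, (F j x).card = s ^ (k - d j x) := by
    intro j x
    rw [hF]
    rw [Fintype.card_piFinset]
    have : ∀ i : Fin k, (if h : P j (x i) then ({(⟨((x i - j) : Fin (T+1)).val, h⟩ : Fin s)} : Finset (Fin s)) else Finset.univ).card
        = if P j (x i) then 1 else s := by
      intro i
      split_ifs with h <;> simp
    rw [Finset.prod_congr rfl fun i _ => this i]
    rw [Finset.prod_ite]
    simp only [Finset.prod_const_one, Finset.prod_const, one_mul]
    congr 1
    have h1 := Finset.card_filter_add_card_filter_not (s := (Finset.univ : Finset (Fin k)))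
      (p := fun i => P j (x i))
    have h2 : d j x = (Finset.univ.filter fun i => P j (x i)).card := rfl
    have hk : (Finset.univ : Finset (Fin k)).card = k := by simp
    omega
  have hdisj : ∀ j, ∀ x ∈ X, ∀ y ∈ X, x ≠ y → Disjoint (F j x) (F j y) := by
    intro j x hx y hy hxy
    rw [Finset.disjoint_left]
    intro f hfx hfy
    obtain ⟨i, hne, hxS, hyS⟩ := hX x hx y hy hxy (W j) (hW j)
    have hPx : P j (x i) := (Finset.mem_filter.mp hxS).2
    have hPy : P j (y i) := (Finset.mem_filter.mp hyS).2
    have h1 := (Fintype.mem_piFinset.mp hfx) i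
    have h2 := (Fintype.mem_piFinset.mp hfy) i
    simp only [dif_pos hPx, Finset.mem_singleton] at h1
    simp only [dif_pos hPy, Finset.mem_singleton] at h2
    apply hne
    have hval : ((x i - j : Fin (T+1)) : ℕ) = ((y i - j : Fin (T+1)) : ℕ) := by
      have h3 := h1.symm.trans h2
      simpa [Fin.mk.injEq] using h3
    have : x i - j = y i - j := Fin.ext hval
    have := congrArg (· + j) this
    simpa [sub_add_cancel] using this
  have hsum : ∀ j, ∑ x ∈ X, s ^ (k - d j x) ≤ s ^ k := by
    intro j
    calc ∑ x ∈ X, s ^ (k - d j x) = ∑ x ∈ X, (F j x).card := by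
          exact Finset.sum_congr rfl fun x _ => (cardF j x).symm
      _ = (X.biUnion (F j)).card := (Finset.card_biUnion (hdisj j)).symm
      _ ≤ Fintype.card (Fin k → Fin s) := Finset.card_le_univ _
      _ = s ^ k := by simp
  have hper : ∀ j, n ^ n ≤ s ^ (∑ x ∈ X, d j x) := by
    intro j
    have amgm := nat_amgm X (fun x => s ^ (k - d j x))
    have h1 : n ^ n * s ^ (∑ x ∈ X, (k - d j x)) ≤ s ^ (k * n) := by
      calc n ^ n * s ^ (∑ x ∈ X, (k - d j x))
          = n ^ n * ∏ x ∈ X, s ^ (k - d j x) := by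
            rw [Finset.prod_pow_eq_pow_sum]
        _ ≤ (∑ x ∈ X, s ^ (k - d j x)) ^ n := amgm
        _ ≤ (s ^ k) ^ n := Nat.pow_le_pow_left (hsum j) n
        _ = s ^ (k * n) := by rw [← pow_mul]
    have hsplit : (∑ x ∈ X, (k - d j x)) + (∑ x ∈ X, d j x) = k * n := by
      rw [← Finset.sum_add_distrib]
      calc ∑ x ∈ X, ((k - d j x) + d j x) = ∑ x ∈ X, k :=
            Finset.sum_congr rfl fun x _ => by have := hd_le j x; omega
        _ = k * n := by rw [Finset.sum_const, smul_eq_mul, mul_comm]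
    have hpos : 0 < s ^ (∑ x ∈ X, (k - d j x)) := pow_pos (by omega) _
    have h3 : s ^ (∑ x ∈ X, (k - d j x)) * n ^ n
        ≤ s ^ (∑ x ∈ X, (k - d j x)) * s ^ (∑ x ∈ X, d j x) := by
      rw [← pow_add, hsplit, mul_comm]
      exact h1
    exact Nat.le_of_mul_le_mul_left h3 hpos
  have hall : (n ^ n) ^ (T+1) ≤ s ^ (s * k * n) := by
    calc (n ^ n) ^ (T+1) = ∏ _j : Fin (T+1), n ^ n := by
          rw [Finset.prod_const, Finset.card_univ, Fintype.card_fin]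
      _ ≤ ∏ j : Fin (T+1), s ^ (∑ x ∈ X, d j x) :=
          Finset.prod_le_prod' fun j _ => hper j
      _ = s ^ (∑ j : Fin (T+1), ∑ x ∈ X, d j x) := Finset.prod_pow_eq_pow_sum _ _ _
      _ = s ^ (s * k * n) := by
          rw [Finset.sum_comm]
          congr 1
          calc ∑ x ∈ X, ∑ j : Fin (T+1), d j x = ∑ x ∈ X, s * k :=
              Finset.sum_congr rfl fun x _ => hdsum x
            _ = s * k * n := by rw [Finset.sum_const, smul_eq_mul, mul_comm]
  have hfin : (n ^ (T+1)) ^ n ≤ (s ^ (s * k)) ^ n := by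
    calc (n ^ (T+1)) ^ n = (n ^ n) ^ (T+1) := by rw [← pow_mul, ← pow_mul, mul_comm]
      _ ≤ s ^ (s * k * n) := hall
      _ = (s ^ (s * k)) ^ n := by rw [← pow_mul]
  exact (Nat.pow_le_pow_iff_left (by omega : n ≠ 0)).mp hfin
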